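/- For n ≥ 2, every partition λ of size strictly greater than n satisfies N̂(λ) ≥ p_{n+1}; equivalently, if N̂(λ) < p_{n+1} then |λ| ≤ n. -/

import Mathlib

set_option linter.unnecessarySeqFocus false
set_option maxHeartbeats 1000000

open Nat Finset

section SupernormAux

lemma count_prime_le (t : ℕ) : Nat.count Nat.Prime (t+1) ≤ t/3 + 4 := by
  rw [Nat.count_eq_card_filter_range]
  have hsub : (Finset.range (t+1)).filter Nat.Prime ⊆
      insert 2 (insert 3 ((Finset.range (t+1)).filter (fun k => k % 6 = 1 ∨ k % 6 = 5))) := by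
    intro p hp
    simp only [Finset.mem_filter, Finset.mem_range] at hp
    obtain ⟨hpr, hppr⟩ := hp
    simp only [Finset.mem_insert, Finset.mem_filter, Finset.mem_range]
    by_cases h2 : p = 2
    · exact Or.inl h2
    by_cases h3 : p = 3
    · exact Or.inr (Or.inl h3)
    refine Or.inr (Or.inr ⟨hpr, ?_⟩)
    have hd2 : ¬ (2 ∣ p) := fun h => h2 ((Nat.prime_dvd_prime_iff_eq Nat.prime_two hppr).mp h).symm
    have hd3 : ¬ (3 ∣ p) := fun h => h3 ((Nat.prime_dvd_prime_iff_eq Nat.prime_three hppr).mp h).symm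
    omega
  have h1 : ((Finset.range (t+1)).filter (fun k => k % 6 = 1 ∨ k % 6 = 5)).card ≤ 2 * (t/6 + 1) := by
    have hsub2 : (Finset.range (t+1)).filter (fun k => k % 6 = 1 ∨ k % 6 = 5) ⊆
        ((Finset.range (t/6+1)).image (fun j => 6*j+1)) ∪
        ((Finset.range (t/6+1)).image (fun j => 6*j+5)) := by
      intro k hk
      simp only [Finset.mem_filter, Finset.mem_range] at hk
      obtain ⟨hk1, hk2⟩ := hk
      simp only [Finset.mem_union, Finset.mem_image, Finset.mem_range]
      rcases hk2 with h | h
      · exact Or.inl ⟨k/6, by omega, by omega⟩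
      · exact Or.inr ⟨k/6, by omega, by omega⟩
    calc _ ≤ _ := Finset.card_le_card hsub2
      _ ≤ _ + _ := Finset.card_union_le _ _
      _ ≤ (t/6+1) + (t/6+1) := by
          gcongr <;> exact (Finset.card_image_le).trans (by simp)
      _ = 2 * (t/6+1) := by ring
  calc ((Finset.range (t+1)).filter Nat.Prime).card ≤ _ := Finset.card_le_card hsub
    _ ≤ 2 + ((Finset.range (t+1)).filter (fun k => k % 6 = 1 ∨ k % 6 = 5)).card := by
        have a1 := Finset.card_insert_le 2 (insert 3 ((Finset.range (t+1)).filter (fun k => k % 6 = 1 ∨ k % 6 = 5)))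
        have a2 := Finset.card_insert_le 3 ((Finset.range (t+1)).filter (fun k => k % 6 = 1 ∨ k % 6 = 5))
        omega
    _ ≤ 2 + 2*(t/6+1) := by omega
    _ ≤ t/3 + 4 := by omega

lemma centralBinom_le_pow {n : ℕ} (hn : 0 < n) :
    Nat.centralBinom n ≤ (2*n) ^ (Nat.count Nat.Prime (2*n+1)) := by
  rw [Nat.count_eq_card_filter_range]
  have h1 : ∏ p ∈ (Finset.range (2*n+1)).filter Nat.Prime,
      p ^ (Nat.centralBinom n).factorization p = ∏ p ∈ Finset.range (2*n+1),
      p ^ (Nat.centralBinom n).factorization p := by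
    refine Finset.prod_filter_of_ne fun p _ h => ?_
    contrapose! h
    rw [Nat.factorization_eq_zero_of_not_prime _ h, pow_zero]
  rw [← Nat.prod_pow_factorization_centralBinom n, ← h1]
  calc ∏ p ∈ (Finset.range (2*n+1)).filter Nat.Prime, p ^ (Nat.centralBinom n).factorization p
      ≤ ∏ _p ∈ (Finset.range (2*n+1)).filter Nat.Prime, 2*n := by
        refine Finset.prod_le_prod' fun p _ => ?_
        exact Nat.pow_factorization_choose_le (by omega)
    _ = (2*n) ^ ((Finset.range (2*n+1)).filter Nat.Prime).card := Finset.prod_const _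

lemma chebyshev_lower {N : ℕ} (hN : 8 ≤ N) :
    N - 1 < (Nat.log 2 N + 1) * (Nat.count Nat.Prime (N+1) + 1) := by
  set h := N / 2 with hh
  have h4 : 4 ≤ h := by omega
  have H1 : 4 ^ h < h * Nat.centralBinom h := Nat.four_pow_lt_mul_centralBinom h h4
  have H2 : Nat.centralBinom h ≤ (2*h) ^ (Nat.count Nat.Prime (2*h+1)) :=
    centralBinom_le_pow (by omega)
  have hc : Nat.count Nat.Prime (2*h+1) ≤ Nat.count Nat.Prime (N+1) :=
    Nat.count_monotone _ (by omega)
  have H3 : 4 ^ h < N ^ (Nat.count Nat.Prime (N+1) + 1) := by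
    calc 4 ^ h < h * (2*h) ^ (Nat.count Nat.Prime (2*h+1)) :=
          lt_of_lt_of_le H1 (Nat.mul_le_mul_left _ H2)
      _ ≤ N * N ^ (Nat.count Nat.Prime (N+1)) := by
          refine Nat.mul_le_mul (by omega) ?_
          exact Nat.pow_le_pow_left (by omega) _ |>.trans
            (Nat.pow_le_pow_right (by omega) hc)
      _ = N ^ (Nat.count Nat.Prime (N+1) + 1) := by ring
  have hNpow : N < 2 ^ (Nat.log 2 N + 1) := Nat.lt_pow_succ_log_self (by omega) N
  have H4 : (2:ℕ) ^ (N - 1) < 2 ^ ((Nat.log 2 N + 1) * (Nat.count Nat.Prime (N+1) + 1)) := by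
    calc (2:ℕ) ^ (N-1) ≤ 2 ^ (2*h) := Nat.pow_le_pow_right (by omega) (by omega)
      _ = 4 ^ h := by rw [pow_mul]; norm_num
      _ < N ^ (Nat.count Nat.Prime (N+1) + 1) := H3
      _ ≤ (2 ^ (Nat.log 2 N + 1)) ^ (Nat.count Nat.Prime (N+1) + 1) :=
          Nat.pow_le_pow_left (le_of_lt hNpow) _
      _ = 2 ^ ((Nat.log 2 N + 1) * (Nat.count Nat.Prime (N+1) + 1)) := by rw [← pow_mul]
  have := (Nat.pow_lt_pow_iff_right (a := 2) (by omega)).mp H4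
  omega

lemma erdos_interval {m k : ℕ} (hm : 4 ≤ m)
    (hk : Nat.count Nat.Prime (2*m+1) ≤ Nat.count Nat.Prime (m+1) + k) :
    2*(m - 2*m/3) < (Nat.log 2 (2*m) + 1) * (Nat.count Nat.Prime (Nat.sqrt (2*m) + 1) + k + 1) := by
  set s := Nat.count Nat.Prime (Nat.sqrt (2*m) + 1) with hs
  set R := (Finset.range (2*m+1)).filter Nat.Prime with hR
  set f : ℕ → ℕ := fun p => p ^ (Nat.centralBinom m).factorization p with hf
  have hprodR : ∏ p ∈ R, f p = Nat.centralBinom m := by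
    rw [hR]
    rw [← Nat.prod_pow_factorization_centralBinom m]
    refine Finset.prod_filter_of_ne fun p _ h => ?_
    contrapose! h
    simp only [hf]
    rw [Nat.factorization_eq_zero_of_not_prime _ h, pow_zero]
  -- part A : primes ≤ 2m/3
  have hsplit1 : (∏ p ∈ R.filter (fun p => p ≤ 2*m/3), f p) *
      (∏ p ∈ R.filter (fun p => ¬ p ≤ 2*m/3), f p) = Nat.centralBinom m := by
    rw [Finset.prod_filter_mul_prod_filter_not, hprodR]
  -- A1 : primes ≤ sqrt (2m)
  have hA1 : ∏ p ∈ (R.filter (fun p => p ≤ 2*m/3)).filter (fun p => p ≤ Nat.sqrt (2*m)), f p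
      ≤ (2*m) ^ s := by
    calc ∏ p ∈ (R.filter (fun p => p ≤ 2*m/3)).filter (fun p => p ≤ Nat.sqrt (2*m)), f p
        ≤ ∏ _p ∈ (R.filter (fun p => p ≤ 2*m/3)).filter (fun p => p ≤ Nat.sqrt (2*m)), 2*m := by
          refine Finset.prod_le_prod' fun p _ => ?_
          exact Nat.pow_factorization_choose_le (by omega)
      _ = (2*m) ^ ((R.filter (fun p => p ≤ 2*m/3)).filter (fun p => p ≤ Nat.sqrt (2*m))).card :=
          Finset.prod_const _
      _ ≤ (2*m) ^ s := by
          refine Nat.pow_le_pow_right (by omega) ?_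
          rw [hs, Nat.count_eq_card_filter_range]
          refine Finset.card_le_card fun p hp => ?_
          simp only [Finset.mem_filter, Finset.mem_range, hR] at hp ⊢
          exact ⟨by omega, hp.1.1.2⟩
  -- A2 : sqrt (2m) < p ≤ 2m/3
  have hA2 : ∏ p ∈ (R.filter (fun p => p ≤ 2*m/3)).filter (fun p => ¬ p ≤ Nat.sqrt (2*m)), f p
      ≤ 4 ^ (2*m/3) := by
    refine le_trans ?_ (primorial_le_4_pow (2*m/3))
    unfold primorial
    calc ∏ p ∈ (R.filter (fun p => p ≤ 2*m/3)).filter (fun p => ¬ p ≤ Nat.sqrt (2*m)), f p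
        ≤ ∏ p ∈ (R.filter (fun p => p ≤ 2*m/3)).filter (fun p => ¬ p ≤ Nat.sqrt (2*m)), p := by
          refine Finset.prod_le_prod' fun p hp => ?_
          simp only [Finset.mem_filter, hR, Finset.mem_range] at hp
          have he : (Nat.centralBinom m).factorization p ≤ 1 := by
            refine Nat.factorization_choose_le_one ?_
            have := hp.2
            have h2 : Nat.sqrt (2*m) < p := by omega
            exact Nat.sqrt_lt'.mp h2
          simp only [hf]
          calc p ^ (Nat.centralBinom m).factorization p ≤ p ^ 1 :=
                Nat.pow_le_pow_right (hp.1.1.2.pos) he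
            _ = p := pow_one p
      _ ≤ ∏ p ∈ (Finset.range (2*m/3+1)).filter Nat.Prime, p := by
          refine Finset.prod_le_prod_of_subset_of_one_le' (fun p hp => ?_)
            (fun p hp _ => ?_)
          · simp only [Finset.mem_filter, hR, Finset.mem_range] at hp ⊢
            exact ⟨by omega, hp.1.1.2⟩
          · exact (Finset.mem_filter.mp hp).2.one_lt.le
  -- B : primes > 2m/3
  have hB : ∏ p ∈ R.filter (fun p => ¬ p ≤ 2*m/3), f p ≤ (2*m) ^ k := by
    rw [← Finset.prod_filter_mul_prod_filter_not (R.filter (fun p => ¬ p ≤ 2*m/3))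
      (fun p => p ≤ m)]
    have hB1 : ∏ p ∈ (R.filter (fun p => ¬ p ≤ 2*m/3)).filter (fun p => p ≤ m), f p = 1 := by
      refine Finset.prod_eq_one fun p hp => ?_
      simp only [Finset.mem_filter, hR, Finset.mem_range] at hp
      simp only [hf]
      rw [Nat.factorization_centralBinom_of_two_mul_self_lt_three_mul (by omega) hp.2 (by omega),
        pow_zero]
    have hB2 : ∏ p ∈ (R.filter (fun p => ¬ p ≤ 2*m/3)).filter (fun p => ¬ p ≤ m), f p
        ≤ (2*m) ^ k := by
      set S := (R.filter (fun p => ¬ p ≤ 2*m/3)).filter (fun p => ¬ p ≤ m) with hS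
      have hcard : S.card ≤ k := by
        have hdisj : Disjoint ((Finset.range (m+1)).filter Nat.Prime) S := by
          refine Finset.disjoint_left.mpr fun p hp hp' => ?_
          simp only [Finset.mem_filter, Finset.mem_range, hS, hR] at hp hp'
          omega
        have hsub : ((Finset.range (m+1)).filter Nat.Prime) ∪ S ⊆
            (Finset.range (2*m+1)).filter Nat.Prime := by
          refine Finset.union_subset (fun p hp => ?_) (fun p hp => ?_)
          · simp only [Finset.mem_filter, Finset.mem_range] at hp ⊢
            exact ⟨by omega, hp.2⟩
          · simp only [hS, hR, Finset.mem_filter, Finset.mem_range] at hp ⊢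
            exact ⟨hp.1.1.1, hp.1.1.2⟩
        have := Finset.card_le_card hsub
        rw [Finset.card_union_of_disjoint hdisj] at this
        rw [← Nat.count_eq_card_filter_range, ← Nat.count_eq_card_filter_range] at this
        omega
      calc ∏ p ∈ S, f p ≤ ∏ _p ∈ S, 2*m := by
            refine Finset.prod_le_prod' fun p _ => ?_
            exact Nat.pow_factorization_choose_le (by omega)
        _ = (2*m) ^ S.card := Finset.prod_const _
        _ ≤ (2*m) ^ k := Nat.pow_le_pow_right (by omega) hcard
    calc (∏ p ∈ (R.filter (fun p => ¬ p ≤ 2*m/3)).filter (fun p => p ≤ m), f p) *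
        (∏ p ∈ (R.filter (fun p => ¬ p ≤ 2*m/3)).filter (fun p => ¬ p ≤ m), f p)
        = ∏ p ∈ (R.filter (fun p => ¬ p ≤ 2*m/3)).filter (fun p => ¬ p ≤ m), f p := by
          rw [hB1, one_mul]
      _ ≤ (2*m) ^ k := hB2
  -- combine
  have hmain : Nat.centralBinom m ≤ (2*m) ^ s * 4 ^ (2*m/3) * (2*m) ^ k := by
    rw [← hsplit1]
    have hA : ∏ p ∈ R.filter (fun p => p ≤ 2*m/3), f p ≤ (2*m) ^ s * 4 ^ (2*m/3) := by
      rw [← Finset.prod_filter_mul_prod_filter_not (R.filter (fun p => p ≤ 2*m/3))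
        (fun p => p ≤ Nat.sqrt (2*m))]
      exact Nat.mul_le_mul hA1 hA2
    exact Nat.mul_le_mul hA hB
  have H1 : 4 ^ m < m * Nat.centralBinom m := Nat.four_pow_lt_mul_centralBinom m hm
  have H2 : 4 ^ m < (2*m) ^ (s + k + 1) * 4 ^ (2*m/3) := by
    calc 4 ^ m < m * Nat.centralBinom m := H1
      _ ≤ m * ((2*m) ^ s * 4 ^ (2*m/3) * (2*m) ^ k) := Nat.mul_le_mul_left _ hmain
      _ = (m * ((2*m) ^ s * (2*m) ^ k)) * 4 ^ (2*m/3) := by ring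
      _ ≤ ((2*m) * ((2*m) ^ s * (2*m) ^ k)) * 4 ^ (2*m/3) := by
          refine Nat.mul_le_mul_right _ (Nat.mul_le_mul_right _ (by omega))
      _ = (2*m) ^ (s + k + 1) * 4 ^ (2*m/3) := by ring
  -- cancel 4 ^ (2m/3)
  set A := m - 2*m/3 with hA'
  have hA4 : 4 ^ A < (2*m) ^ (s + k + 1) := by
    have hpowsplit : (4:ℕ) ^ m = 4 ^ (2*m/3) * 4 ^ A := by
      rw [← pow_add]
      congr 1
      omega
    rw [hpowsplit] at H2
    rw [mul_comm ((2*m) ^ (s + k + 1)) (4 ^ (2*m/3))] at H2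
    exact Nat.lt_of_mul_lt_mul_left H2
  have hL : 2*m < 2 ^ (Nat.log 2 (2*m) + 1) := Nat.lt_pow_succ_log_self (by omega) _
  have hfin : (2:ℕ) ^ (2*A) < 2 ^ ((Nat.log 2 (2*m) + 1) * (s + k + 1)) := by
    calc (2:ℕ) ^ (2*A) = 4 ^ A := by rw [pow_mul]; norm_num
      _ < (2*m) ^ (s + k + 1) := hA4
      _ ≤ (2 ^ (Nat.log 2 (2*m) + 1)) ^ (s + k + 1) := Nat.pow_le_pow_left hL.le _
      _ = 2 ^ ((Nat.log 2 (2*m) + 1) * (s + k + 1)) := by rw [← pow_mul]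
  have := (Nat.pow_lt_pow_iff_right (a := 2) (by omega)).mp hfin
  omega

lemma pow_aux1 : ∀ l, 10 ≤ l → 2*(l+1) ≤ 2^(l/2) := by
  intro l
  induction l using Nat.strong_induction_on with
  | _ l ih =>
    intro hl
    by_cases h12 : l < 12
    · interval_cases l <;> norm_num
    · have h1 := ih (l-2) (by omega) (by omega)
      have h2 : 2^(l/2) = 2 * 2^((l-2)/2) := by
        rw [← pow_succ']
        congr 1
        omega
      omega
lemma pow_aux2 (l : ℕ) (hl : 12 ≤ l) : 3*((l+1)*(l+10)) ≤ 2^(l-1) := by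
  induction l, hl using Nat.le_induction with
  | base => norm_num
  | succ l hl ih =>
    have h2 : 2^(l-1) * 2 = 2^(l+1-1) := by
      rw [← pow_succ]
      congr 1
      omega
    have h3 : 3*((l+1+1)*(l+1+10)) ≤ 2*(3*((l+1)*(l+10))) := by nlinarith
    omega

lemma superadd_big {x y : ℕ} (hx : Odd x) (hy : Odd y) (h3 : 3 ≤ x) (hxy : x ≤ y)
    (hN : 1024 ≤ x*y) :
    Nat.count Nat.Prime (x+1) + Nat.count Nat.Prime (y+1) ≤ Nat.count Nat.Prime (x*y+1) := by
  set N := x*y with hNdef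
  have hyy : N ≤ y*y := Nat.mul_le_mul_right y hxy
  have h3y : 3*y ≤ N := Nat.mul_le_mul_right y h3
  have hy23 : 23 ≤ y := by nlinarith
  have hNodd : Odd N := hx.mul hy
  have hN2 : N % 2 = 1 := Nat.odd_iff.mp hNodd
  set L := Nat.log 2 N with hLdef
  have hL10 : 10 ≤ L := by
    rw [hLdef]
    exact (Nat.le_log_iff_pow_le (by norm_num) (by omega)).mpr (by norm_num; omega)
  have hux := count_prime_le x
  have huy := count_prime_le y
  by_cases hQ : 3*((L+1)*(y+4)) < 2*N
  · -- Case I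
    by_contra hcon
    push_neg at hcon
    have h1 := chebyshev_lower (N := N) (by omega)
    rw [← hLdef] at h1
    have key : (L+1)*(Nat.count Nat.Prime (N+1) + 1) ≤ (L+1)*(y+4) := by
      refine Nat.mul_le_mul_left _ ?_
      omega
    omega
  · -- Case II
    push_neg at hQ
    have hxb : 46*x ≤ 81*(L+1) := by
      have h1 : 23*(y+4) ≤ 27*y := by omega
      have h2 : (46*x)*y ≤ (81*(L+1))*y := by
        calc (46*x)*y = 23*(2*N) := by rw [hNdef]; ring
          _ ≤ 23*(3*((L+1)*(y+4))) := by omega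
          _ = 3*(L+1)*(23*(y+4)) := by ring
          _ ≤ 3*(L+1)*(27*y) := Nat.mul_le_mul_left _ h1
          _ = (81*(L+1))*y := by ring
      exact Nat.le_of_mul_le_mul_right h2 (by omega)
    set m := N/2 with hmdef
    have hm2 : 2*m = N - 1 := by omega
    set M := 2*m with hMdef
    have hM1024 : 1024 ≤ M := by omega
    set L2 := Nat.log 2 M with hL2def
    have hL2ten : 10 ≤ L2 := by
      rw [hL2def]
      exact (Nat.le_log_iff_pow_le (by norm_num) (by omega)).mpr (by norm_num; omega)
    have hLL2 : L ≤ L2 + 1 := by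
      have hMpow : M < 2 ^ (L2 + 1) := Nat.lt_pow_succ_log_self (by norm_num) M
      have hNle : N ≤ 2 ^ (L2+1) := by omega
      calc L ≤ Nat.log 2 (2 ^ (L2+1)) := Nat.log_mono_right hNle
        _ = L2 + 1 := Nat.log_pow (by norm_num) _
    set r := Nat.sqrt M with hrdef
    have hr2 : r*r ≤ M := Nat.sqrt_le M
    have hrlow : 2^(L2/2) ≤ r := by
      rw [hrdef]
      rw [Nat.le_sqrt]
      calc 2^(L2/2) * 2^(L2/2) = 2^(L2/2 + L2/2) := by rw [pow_add]
        _ ≤ 2^L2 := Nat.pow_le_pow_right (by norm_num) (by omega)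
        _ ≤ M := Nat.pow_log_le_self 2 (by omega)
    have hra : 2*(L2+1) ≤ r := le_trans (pow_aux1 L2 hL2ten) hrlow
    have hmlow : 2^(L2-1) ≤ m := by
      have : 2^L2 ≤ M := Nat.pow_log_le_self 2 (by omega)
      have h2 : 2^(L2-1) * 2 = 2^L2 := by
        rw [← pow_succ]
        congr 1
        omega
      omega
    -- part (a)
    have ha : (L2+1)*(r/3) ≤ m/3 := by
      have h1 : 2*((L2+1)*r) ≤ r*r := by
        calc 2*((L2+1)*r) = (2*(L2+1))*r := by ring
          _ ≤ r*r := Nat.mul_le_mul_right r hra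
      have h2 : (L2+1)*r ≤ m := by omega
      calc (L2+1)*(r/3) ≤ ((L2+1)*r)/3 := Nat.mul_div_le_mul_div_assoc _ _ _
        _ ≤ m/3 := Nat.div_le_div_right h2
    -- part (b)
    have hb : (L2+1)*(x/3+8) ≤ m/3 := by
      have hc3 : L2 = 10 ∨ L2 = 11 ∨ 12 ≤ L2 := by omega
      rcases hc3 with hc | hc | hc
      · have hm512 : 512 ≤ m := by
          rw [hc] at hmlow
          norm_num at hmlow
          omega
        have hxle : x ≤ 21 := by omega
        rw [hc]
        omega
      · have hm1024 : 1024 ≤ m := by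
          rw [hc] at hmlow
          norm_num at hmlow
          omega
        have hxle : x ≤ 22 := by omega
        rw [hc]
        omega
      · have hxle : x ≤ 2*L2+4 := by omega
        have h1 : x/3+8 ≤ L2+10 := by omega
        have h2 : 3*((L2+1)*(L2+10)) ≤ m := le_trans (pow_aux2 L2 hc) hmlow
        have h3 : (L2+1)*(x/3+8) ≤ (L2+1)*(L2+10) := Nat.mul_le_mul_left _ h1
        omega
    have hcii : (L2+1)*(r/3 + (x/3+8)) ≤ 2*(m - 2*m/3) := by
      rw [Nat.mul_add]
      omega
    -- apply erdos
    have hcx1 : 1 ≤ Nat.count Nat.Prime (x+1) := by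
      have h4 : Nat.count Nat.Prime 4 ≤ Nat.count Nat.Prime (x+1) := Nat.count_monotone _ (by omega)
      have : Nat.count Nat.Prime 4 = 2 := by
        simp [Nat.count_succ, Nat.prime_two, Nat.prime_three, Nat.not_prime_one, Nat.not_prime_zero]
      omega
    have hkey : Nat.count Nat.Prime (m+1) + Nat.count Nat.Prime (x+1)
        ≤ Nat.count Nat.Prime (2*m+1) := by
      by_contra hcon
      push_neg at hcon
      have herd := erdos_interval (m := m) (k := Nat.count Nat.Prime (x+1) - 1)
        (by omega) (by omega)
      rw [← hMdef, ← hL2def, ← hrdef] at herd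
      have hs := count_prime_le r
      have hmul : (L2+1)*(Nat.count Nat.Prime (r+1) + (Nat.count Nat.Prime (x+1) - 1) + 1)
          ≤ (L2+1)*(r/3 + (x/3+8)) := by
        refine Nat.mul_le_mul_left _ ?_
        omega
      omega
    have hfin1 : Nat.count Nat.Prime (2*m+1) ≤ Nat.count Nat.Prime (N+1) :=
      Nat.count_monotone _ (by omega)
    have hfin2 : Nat.count Nat.Prime (y+1) ≤ Nat.count Nat.Prime (m+1) := by
      refine Nat.count_monotone _ ?_
      omega
    omega

lemma count_nth_prime_succ (i : ℕ) :
    Nat.count Nat.Prime (Nat.nth Nat.Prime i + 1) = i + 1 := by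
  rw [Nat.count_succ, Nat.count_nth_of_infinite Nat.infinite_setOf_prime,
    if_pos (Nat.nth_mem_of_infinite Nat.infinite_setOf_prime i)]

lemma nth_prime_succ_le {b q : ℕ} (hq : q.Prime) (h : Nat.nth Nat.Prime b < q) :
    Nat.nth Nat.Prime (b+1) ≤ q := by
  have h1 : Nat.count Nat.Prime (Nat.nth Nat.Prime b + 1) ≤ Nat.count Nat.Prime q :=
    Nat.count_monotone _ (by omega)
  rw [count_nth_prime_succ] at h1
  have h2 : Nat.count Nat.Prime (q+1) = Nat.count Nat.Prime q + 1 := by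
    rw [Nat.count_succ, if_pos hq]
  have h3 : b + 1 < Nat.count Nat.Prime (q+1) := by omega
  have := Nat.nth_lt_of_lt_count h3
  omega

lemma nth_prime_next {i p q : ℕ} (h : Nat.nth Nat.Prime i = p) (hq : Nat.Prime q) (hpq : p < q)
    (hgap : ∀ m', p < m' → m' < q → ¬ Nat.Prime m') : Nat.nth Nat.Prime (i+1) = q := by
  have hcount : Nat.count Nat.Prime q = i + 1 := by
    have hsplit : Finset.range q = Finset.range (p+1) ∪ Finset.Ico (p+1) q := by
      rw [Finset.range_eq_Ico, Finset.range_eq_Ico,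
        Finset.Ico_union_Ico_eq_Ico (Nat.zero_le (p+1)) (by omega : p+1 ≤ q)]
    have hempty : (Finset.Ico (p+1) q).filter Nat.Prime = ∅ := by
      refine Finset.filter_eq_empty_iff.mpr fun {m} hm => ?_
      rw [Finset.mem_Ico] at hm
      exact hgap m (by omega) hm.2
    rw [Nat.count_eq_card_filter_range, hsplit, Finset.filter_union, hempty,
      Finset.union_empty, ← Nat.count_eq_card_filter_range]
    rw [← h, count_nth_prime_succ]
  rw [← hcount, Nat.nth_count hq]

lemma nthp0 : Nat.nth Nat.Prime 0 = 2 := Nat.nth_prime_zero_eq_two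
lemma nthp1 : Nat.nth Nat.Prime 1 = 3 := nth_prime_next nthp0 (by norm_num) (by norm_num)
  (by intro m h1 h2; omega)
lemma nthp2 : Nat.nth Nat.Prime 2 = 5 := nth_prime_next nthp1 (by norm_num) (by norm_num)
  (by intro m h1 h2; interval_cases m <;> norm_num)
lemma nthp3 : Nat.nth Nat.Prime 3 = 7 := nth_prime_next nthp2 (by norm_num) (by norm_num)
  (by intro m h1 h2; interval_cases m <;> norm_num)
lemma nthp4 : Nat.nth Nat.Prime 4 = 11 := nth_prime_next nthp3 (by norm_num) (by norm_num)
  (by intro m h1 h2; interval_cases m <;> norm_num)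
lemma nthp5 : Nat.nth Nat.Prime 5 = 13 := nth_prime_next nthp4 (by norm_num) (by norm_num)
  (by intro m h1 h2; interval_cases m <;> norm_num)
lemma nthp6 : Nat.nth Nat.Prime 6 = 17 := nth_prime_next nthp5 (by norm_num) (by norm_num)
  (by intro m h1 h2; interval_cases m <;> norm_num)
lemma nthp7 : Nat.nth Nat.Prime 7 = 19 := nth_prime_next nthp6 (by norm_num) (by norm_num)
  (by intro m h1 h2; interval_cases m <;> norm_num)
lemma nthp8 : Nat.nth Nat.Prime 8 = 23 := nth_prime_next nthp7 (by norm_num) (by norm_num)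
  (by intro m h1 h2; interval_cases m <;> norm_num)
lemma nthp9 : Nat.nth Nat.Prime 9 = 29 := nth_prime_next nthp8 (by norm_num) (by norm_num)
  (by intro m h1 h2; interval_cases m <;> norm_num)
lemma nthp10 : Nat.nth Nat.Prime 10 = 31 := nth_prime_next nthp9 (by norm_num) (by norm_num)
  (by intro m h1 h2; interval_cases m <;> norm_num)
lemma nthp11 : Nat.nth Nat.Prime 11 = 37 := nth_prime_next nthp10 (by norm_num) (by norm_num)
  (by intro m h1 h2; interval_cases m <;> norm_num)
lemma nthp12 : Nat.nth Nat.Prime 12 = 41 := nth_prime_next nthp11 (by norm_num) (by norm_num)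
  (by intro m h1 h2; interval_cases m <;> norm_num)
lemma nthp13 : Nat.nth Nat.Prime 13 = 43 := nth_prime_next nthp12 (by norm_num) (by norm_num)
  (by intro m h1 h2; interval_cases m <;> norm_num)
lemma nthp14 : Nat.nth Nat.Prime 14 = 47 := nth_prime_next nthp13 (by norm_num) (by norm_num)
  (by intro m h1 h2; interval_cases m <;> norm_num)
lemma nthp15 : Nat.nth Nat.Prime 15 = 53 := nth_prime_next nthp14 (by norm_num) (by norm_num)
  (by intro m h1 h2; interval_cases m <;> norm_num)
lemma nthp16 : Nat.nth Nat.Prime 16 = 59 := nth_prime_next nthp15 (by norm_num) (by norm_num)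
  (by intro m h1 h2; interval_cases m <;> norm_num)
lemma nthp17 : Nat.nth Nat.Prime 17 = 61 := nth_prime_next nthp16 (by norm_num) (by norm_num)
  (by intro m h1 h2; interval_cases m <;> norm_num)
lemma nthp18 : Nat.nth Nat.Prime 18 = 67 := nth_prime_next nthp17 (by norm_num) (by norm_num)
  (by intro m h1 h2; interval_cases m <;> norm_num)
lemma nthp19 : Nat.nth Nat.Prime 19 = 71 := nth_prime_next nthp18 (by norm_num) (by norm_num)
  (by intro m h1 h2; interval_cases m <;> norm_num)
lemma nthp20 : Nat.nth Nat.Prime 20 = 73 := nth_prime_next nthp19 (by norm_num) (by norm_num)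
  (by intro m h1 h2; interval_cases m <;> norm_num)
lemma nthp21 : Nat.nth Nat.Prime 21 = 79 := nth_prime_next nthp20 (by norm_num) (by norm_num)
  (by intro m h1 h2; interval_cases m <;> norm_num)
lemma nthp22 : Nat.nth Nat.Prime 22 = 83 := nth_prime_next nthp21 (by norm_num) (by norm_num)
  (by intro m h1 h2; interval_cases m <;> norm_num)
lemma nthp23 : Nat.nth Nat.Prime 23 = 89 := nth_prime_next nthp22 (by norm_num) (by norm_num)
  (by intro m h1 h2; interval_cases m <;> norm_num)
lemma nthp24 : Nat.nth Nat.Prime 24 = 97 := nth_prime_next nthp23 (by norm_num) (by norm_num)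
  (by intro m h1 h2; interval_cases m <;> norm_num)
lemma nthp25 : Nat.nth Nat.Prime 25 = 101 := nth_prime_next nthp24 (by norm_num) (by norm_num)
  (by intro m h1 h2; interval_cases m <;> norm_num)
lemma nthp26 : Nat.nth Nat.Prime 26 = 103 := nth_prime_next nthp25 (by norm_num) (by norm_num)
  (by intro m h1 h2; interval_cases m <;> norm_num)
lemma nthp27 : Nat.nth Nat.Prime 27 = 107 := nth_prime_next nthp26 (by norm_num) (by norm_num)
  (by intro m h1 h2; interval_cases m <;> norm_num)
lemma nthp28 : Nat.nth Nat.Prime 28 = 109 := nth_prime_next nthp27 (by norm_num) (by norm_num)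
  (by intro m h1 h2; interval_cases m <;> norm_num)
lemma nthp29 : Nat.nth Nat.Prime 29 = 113 := nth_prime_next nthp28 (by norm_num) (by norm_num)
  (by intro m h1 h2; interval_cases m <;> norm_num)
lemma nthp30 : Nat.nth Nat.Prime 30 = 127 := nth_prime_next nthp29 (by norm_num) (by norm_num)
  (by intro m h1 h2; interval_cases m <;> norm_num)
lemma nthp31 : Nat.nth Nat.Prime 31 = 131 := nth_prime_next nthp30 (by norm_num) (by norm_num)
  (by intro m h1 h2; interval_cases m <;> norm_num)
lemma nthp32 : Nat.nth Nat.Prime 32 = 137 := nth_prime_next nthp31 (by norm_num) (by norm_num)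
  (by intro m h1 h2; interval_cases m <;> norm_num)
lemma nthp33 : Nat.nth Nat.Prime 33 = 139 := nth_prime_next nthp32 (by norm_num) (by norm_num)
  (by intro m h1 h2; interval_cases m <;> norm_num)
lemma nthp34 : Nat.nth Nat.Prime 34 = 149 := nth_prime_next nthp33 (by norm_num) (by norm_num)
  (by intro m h1 h2; interval_cases m <;> norm_num)
lemma nthp35 : Nat.nth Nat.Prime 35 = 151 := nth_prime_next nthp34 (by norm_num) (by norm_num)
  (by intro m h1 h2; interval_cases m <;> norm_num)
lemma nthp36 : Nat.nth Nat.Prime 36 = 157 := nth_prime_next nthp35 (by norm_num) (by norm_num)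
  (by intro m h1 h2; interval_cases m <;> norm_num)
lemma nthp37 : Nat.nth Nat.Prime 37 = 163 := nth_prime_next nthp36 (by norm_num) (by norm_num)
  (by intro m h1 h2; interval_cases m <;> norm_num)
lemma nthp38 : Nat.nth Nat.Prime 38 = 167 := nth_prime_next nthp37 (by norm_num) (by norm_num)
  (by intro m h1 h2; interval_cases m <;> norm_num)
lemma nthp39 : Nat.nth Nat.Prime 39 = 173 := nth_prime_next nthp38 (by norm_num) (by norm_num)
  (by intro m h1 h2; interval_cases m <;> norm_num)
lemma nthp40 : Nat.nth Nat.Prime 40 = 179 := nth_prime_next nthp39 (by norm_num) (by norm_num)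
  (by intro m h1 h2; interval_cases m <;> norm_num)
lemma nthp41 : Nat.nth Nat.Prime 41 = 181 := nth_prime_next nthp40 (by norm_num) (by norm_num)
  (by intro m h1 h2; interval_cases m <;> norm_num)
lemma nthp42 : Nat.nth Nat.Prime 42 = 191 := nth_prime_next nthp41 (by norm_num) (by norm_num)
  (by intro m h1 h2; interval_cases m <;> norm_num)
lemma nthp43 : Nat.nth Nat.Prime 43 = 193 := nth_prime_next nthp42 (by norm_num) (by norm_num)
  (by intro m h1 h2; interval_cases m <;> norm_num)
lemma nthp44 : Nat.nth Nat.Prime 44 = 197 := nth_prime_next nthp43 (by norm_num) (by norm_num)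
  (by intro m h1 h2; interval_cases m <;> norm_num)
lemma nthp45 : Nat.nth Nat.Prime 45 = 199 := nth_prime_next nthp44 (by norm_num) (by norm_num)
  (by intro m h1 h2; interval_cases m <;> norm_num)
lemma nthp46 : Nat.nth Nat.Prime 46 = 211 := nth_prime_next nthp45 (by norm_num) (by norm_num)
  (by intro m h1 h2; interval_cases m <;> norm_num)
lemma nthp47 : Nat.nth Nat.Prime 47 = 223 := nth_prime_next nthp46 (by norm_num) (by norm_num)
  (by intro m h1 h2; interval_cases m <;> norm_num)
lemma nthp48 : Nat.nth Nat.Prime 48 = 227 := nth_prime_next nthp47 (by norm_num) (by norm_num)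
  (by intro m h1 h2; interval_cases m <;> norm_num)
lemma nthp49 : Nat.nth Nat.Prime 49 = 229 := nth_prime_next nthp48 (by norm_num) (by norm_num)
  (by intro m h1 h2; interval_cases m <;> norm_num)
lemma nthp50 : Nat.nth Nat.Prime 50 = 233 := nth_prime_next nthp49 (by norm_num) (by norm_num)
  (by intro m h1 h2; interval_cases m <;> norm_num)
lemma nthp51 : Nat.nth Nat.Prime 51 = 239 := nth_prime_next nthp50 (by norm_num) (by norm_num)
  (by intro m h1 h2; interval_cases m <;> norm_num)
lemma nthp52 : Nat.nth Nat.Prime 52 = 241 := nth_prime_next nthp51 (by norm_num) (by norm_num)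
  (by intro m h1 h2; interval_cases m <;> norm_num)
lemma nthp53 : Nat.nth Nat.Prime 53 = 251 := nth_prime_next nthp52 (by norm_num) (by norm_num)
  (by intro m h1 h2; interval_cases m <;> norm_num)
lemma nthp54 : Nat.nth Nat.Prime 54 = 257 := nth_prime_next nthp53 (by norm_num) (by norm_num)
  (by intro m h1 h2; interval_cases m <;> norm_num)
lemma nthp55 : Nat.nth Nat.Prime 55 = 263 := nth_prime_next nthp54 (by norm_num) (by norm_num)
  (by intro m h1 h2; interval_cases m <;> norm_num)
lemma nthp56 : Nat.nth Nat.Prime 56 = 269 := nth_prime_next nthp55 (by norm_num) (by norm_num)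
  (by intro m h1 h2; interval_cases m <;> norm_num)
lemma nthp57 : Nat.nth Nat.Prime 57 = 271 := nth_prime_next nthp56 (by norm_num) (by norm_num)
  (by intro m h1 h2; interval_cases m <;> norm_num)
lemma nthp58 : Nat.nth Nat.Prime 58 = 277 := nth_prime_next nthp57 (by norm_num) (by norm_num)
  (by intro m h1 h2; interval_cases m <;> norm_num)
lemma nthp59 : Nat.nth Nat.Prime 59 = 281 := nth_prime_next nthp58 (by norm_num) (by norm_num)
  (by intro m h1 h2; interval_cases m <;> norm_num)
lemma nthp60 : Nat.nth Nat.Prime 60 = 283 := nth_prime_next nthp59 (by norm_num) (by norm_num)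
  (by intro m h1 h2; interval_cases m <;> norm_num)
lemma nthp61 : Nat.nth Nat.Prime 61 = 293 := nth_prime_next nthp60 (by norm_num) (by norm_num)
  (by intro m h1 h2; interval_cases m <;> norm_num)
lemma nthp62 : Nat.nth Nat.Prime 62 = 307 := nth_prime_next nthp61 (by norm_num) (by norm_num)
  (by intro m h1 h2; interval_cases m <;> norm_num)
lemma nthp63 : Nat.nth Nat.Prime 63 = 311 := nth_prime_next nthp62 (by norm_num) (by norm_num)
  (by intro m h1 h2; interval_cases m <;> norm_num)
lemma nthp64 : Nat.nth Nat.Prime 64 = 313 := nth_prime_next nthp63 (by norm_num) (by norm_num)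
  (by intro m h1 h2; interval_cases m <;> norm_num)
lemma nthp65 : Nat.nth Nat.Prime 65 = 317 := nth_prime_next nthp64 (by norm_num) (by norm_num)
  (by intro m h1 h2; interval_cases m <;> norm_num)
lemma nthp66 : Nat.nth Nat.Prime 66 = 331 := nth_prime_next nthp65 (by norm_num) (by norm_num)
  (by intro m h1 h2; interval_cases m <;> norm_num)
lemma nthp67 : Nat.nth Nat.Prime 67 = 337 := nth_prime_next nthp66 (by norm_num) (by norm_num)
  (by intro m h1 h2; interval_cases m <;> norm_num)
lemma nthp68 : Nat.nth Nat.Prime 68 = 347 := nth_prime_next nthp67 (by norm_num) (by norm_num)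
  (by intro m h1 h2; interval_cases m <;> norm_num)
lemma nthp69 : Nat.nth Nat.Prime 69 = 349 := nth_prime_next nthp68 (by norm_num) (by norm_num)
  (by intro m h1 h2; interval_cases m <;> norm_num)
lemma nthp70 : Nat.nth Nat.Prime 70 = 353 := nth_prime_next nthp69 (by norm_num) (by norm_num)
  (by intro m h1 h2; interval_cases m <;> norm_num)
lemma nthp71 : Nat.nth Nat.Prime 71 = 359 := nth_prime_next nthp70 (by norm_num) (by norm_num)
  (by intro m h1 h2; interval_cases m <;> norm_num)
lemma nthp72 : Nat.nth Nat.Prime 72 = 367 := nth_prime_next nthp71 (by norm_num) (by norm_num)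
  (by intro m h1 h2; interval_cases m <;> norm_num)
lemma nthp73 : Nat.nth Nat.Prime 73 = 373 := nth_prime_next nthp72 (by norm_num) (by norm_num)
  (by intro m h1 h2; interval_cases m <;> norm_num)
lemma nthp74 : Nat.nth Nat.Prime 74 = 379 := nth_prime_next nthp73 (by norm_num) (by norm_num)
  (by intro m h1 h2; interval_cases m <;> norm_num)
lemma nthp75 : Nat.nth Nat.Prime 75 = 383 := nth_prime_next nthp74 (by norm_num) (by norm_num)
  (by intro m h1 h2; interval_cases m <;> norm_num)
lemma nthp76 : Nat.nth Nat.Prime 76 = 389 := nth_prime_next nthp75 (by norm_num) (by norm_num)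
  (by intro m h1 h2; interval_cases m <;> norm_num)
lemma nthp77 : Nat.nth Nat.Prime 77 = 397 := nth_prime_next nthp76 (by norm_num) (by norm_num)
  (by intro m h1 h2; interval_cases m <;> norm_num)
lemma nthp78 : Nat.nth Nat.Prime 78 = 401 := nth_prime_next nthp77 (by norm_num) (by norm_num)
  (by intro m h1 h2; interval_cases m <;> norm_num)

def tbl : ℕ → ℕ := fun i => [2, 3, 5, 7, 11, 13, 17, 19, 23, 29, 31, 37, 41, 43, 47, 53, 59, 61, 67, 71, 73, 79, 83, 89, 97, 101, 103, 107, 109, 113, 127, 131, 137, 139, 149, 151, 157, 163, 167, 173, 179, 181, 191, 193, 197, 199, 211, 223, 227, 229, 233, 239, 241, 251, 257, 263, 269, 271, 277, 281, 283, 293, 307, 311, 313, 317, 331, 337, 347, 349, 353, 359, 367, 373, 379, 383, 389, 397, 401].getD i 0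

lemma nth_eq_tbl : ∀ i, i ≤ 78 → Nat.nth Nat.Prime i = tbl i := by
  intro i hi
  interval_cases i
  exact nthp0; exact nthp1; exact nthp2; exact nthp3; exact nthp4; exact nthp5; exact nthp6; exact nthp7; exact nthp8; exact nthp9; exact nthp10; exact nthp11; exact nthp12; exact nthp13; exact nthp14; exact nthp15; exact nthp16; exact nthp17; exact nthp18; exact nthp19; exact nthp20; exact nthp21; exact nthp22; exact nthp23; exact nthp24; exact nthp25; exact nthp26; exact nthp27; exact nthp28; exact nthp29; exact nthp30; exact nthp31; exact nthp32; exact nthp33; exact nthp34; exact nthp35; exact nthp36; exact nthp37; exact nthp38; exact nthp39; exact nthp40; exact nthp41; exact nthp42; exact nthp43; exact nthp44; exact nthp45; exact nthp46; exact nthp47; exact nthp48; exact nthp49; exact nthp50; exact nthp51; exact nthp52; exact nthp53; exact nthp54; exact nthp55; exact nthp56; exact nthp57; exact nthp58; exact nthp59; exact nthp60; exact nthp61; exact nthp62; exact nthp63; exact nthp64; exact nthp65; exact nthp66; exact nthp67; exact nthp68; exact nthp69; exact nthp70; exact nthp71; exact nthp72; exact nthp73; exact nthp74; exact nthp75; exact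 nthp76; exact nthp77; exact nthp78

lemma dec_tbl : ∀ a < 11, ∀ b < 68, 1 ≤ a → a ≤ b → tbl a * tbl b ≤ 1023 →
    tbl (a+b+1) ≤ tbl a * tbl b := by decide

end SupernormAux

/-- The i-th prime (1-indexed): p_1 = 2, p_2 = 3, ... -/
noncomputable def nthPrime (i : ℕ) : ℕ := Nat.nth Nat.Prime (i - 1)

/-- The supernorm of a partition (a multiset of positive integers). -/
noncomputable def supernorm (L : Multiset ℕ) : ℕ := (L.map nthPrime).prod

lemma ish (a b : ℕ) (hab : a ≤ b) :
    Nat.nth Nat.Prime (a+b+1) ≤ Nat.nth Nat.Prime a * Nat.nth Nat.Prime b := by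
  have hinf := Nat.infinite_setOf_prime
  rcases Nat.eq_zero_or_pos a with rfl | ha
  · obtain ⟨p, hp, h1, h2⟩ := Nat.exists_prime_lt_and_le_two_mul (Nat.nth Nat.Prime b)
      (Nat.Prime.pos (Nat.prime_nth_prime b)).ne'
    have h3 : Nat.nth Nat.Prime (b+1) ≤ 2 * Nat.nth Nat.Prime b :=
      le_trans (nth_prime_succ_le hp h1) h2
    simpa [Nat.nth_prime_zero_eq_two] using h3
  · set x := Nat.nth Nat.Prime a with hxdef
    set y := Nat.nth Nat.Prime b with hydef
    have hxp : x.Prime := Nat.prime_nth_prime a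
    have hyp : y.Prime := Nat.prime_nth_prime b
    have hx3 : 3 ≤ x := by
      have h1 : Nat.nth Nat.Prime 1 ≤ x := (Nat.nth_le_nth (p := Nat.Prime) hinf).mpr (by omega)
      rwa [Nat.nth_prime_one_eq_three] at h1
    have hxy : x ≤ y := (Nat.nth_le_nth (p := Nat.Prime) hinf).mpr hab
    rcases le_or_gt (x*y) 1023 with hsmall | hbig
    · -- table case
      have hxle : x ≤ 31 := by nlinarith
      have hyle : y ≤ 341 := by nlinarith
      have ha11 : a < 11 := by
        have hv : Nat.nth Nat.Prime 11 = 37 := by rw [nth_eq_tbl 11 (by norm_num)]; rfl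
        exact (Nat.nth_lt_nth (p := Nat.Prime) hinf).mp (by omega)
      have hb68 : b < 68 := by
        have hv : Nat.nth Nat.Prime 68 = 347 := by rw [nth_eq_tbl 68 (by norm_num)]; rfl
        exact (Nat.nth_lt_nth (p := Nat.Prime) hinf).mp (by omega)
      have e1 : x = tbl a := by rw [hxdef, nth_eq_tbl a (by omega)]
      have e2 : y = tbl b := by rw [hydef, nth_eq_tbl b (by omega)]
      have e3 : Nat.nth Nat.Prime (a+b+1) = tbl (a+b+1) := by
        rw [nth_eq_tbl (a+b+1) (by omega)]
      rw [e3, e1, e2]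
      exact dec_tbl a ha11 b hb68 ha hab (by rw [← e1, ← e2]; exact hsmall)
    · -- big case
      have hxodd : Odd x := hxp.odd_of_ne_two (by omega)
      have hyodd : Odd y := hyp.odd_of_ne_two (by omega)
      have hsup := superadd_big hxodd hyodd hx3 hxy (by omega)
      have hca : Nat.count Nat.Prime (x+1) = a+1 := count_nth_prime_succ a
      have hcb : Nat.count Nat.Prime (y+1) = b+1 := count_nth_prime_succ b
      have hlt : a + b + 1 < Nat.count Nat.Prime (x*y+1) := by omega
      have := Nat.nth_lt_of_lt_count hlt
      omega

lemma ish' (a b : ℕ) :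
    Nat.nth Nat.Prime (a+b+1) ≤ Nat.nth Nat.Prime a * Nat.nth Nat.Prime b := by
  rcases le_total a b with h | h
  · exact ish a b h
  · have := ish b a h
    rw [Nat.add_comm b a] at this
    rw [Nat.mul_comm]
    exact this

theorem supernorm_ge_of_size_gt (n : ℕ) (hn : 2 ≤ n) (L : Multiset ℕ)
    (hparts : ∀ i ∈ L, 1 ≤ i) (hsize : n < L.sum) :
    nthPrime (n + 1) ≤ supernorm L := by
  have hinf := Nat.infinite_setOf_prime
  have aux : ∀ (K : Multiset ℕ), (∀ i ∈ K, 1 ≤ i) → K ≠ 0 →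
      Nat.nth Nat.Prime (K.sum - 1) ≤ supernorm K := by
    intro K
    induction K using Multiset.induction_on with
    | empty => intro _ h; exact absurd rfl h
    | cons i M ih =>
      intro hp _
      have hi : 1 ≤ i := hp i (Multiset.mem_cons_self i M)
      have hsup : supernorm (i ::ₘ M) = nthPrime i * supernorm M := by
        simp [supernorm, Multiset.map_cons, Multiset.prod_cons]
      rcases eq_or_ne M 0 with rfl | hM
      · simp only [hsup, Multiset.sum_cons, Multiset.sum_zero, Nat.add_zero]
        have : supernorm (0 : Multiset ℕ) = 1 := by simp [supernorm]
        rw [this, Nat.mul_one]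
        exact le_of_eq rfl
      · have hMsum : 1 ≤ M.sum := by
          obtain ⟨j, hj⟩ := Multiset.exists_mem_of_ne_zero hM
          calc 1 ≤ j := hp j (Multiset.mem_cons_of_mem hj)
            _ ≤ M.sum := Multiset.le_sum_of_mem hj
        have ih' := ih (fun j hj => hp j (Multiset.mem_cons_of_mem hj)) hM
        rw [hsup, Multiset.sum_cons]
        calc Nat.nth Nat.Prime (i + M.sum - 1)
            = Nat.nth Nat.Prime ((i-1) + (M.sum-1) + 1) := by congr 1; omega
          _ ≤ Nat.nth Nat.Prime (i-1) * Nat.nth Nat.Prime (M.sum-1) := ish' _ _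
          _ ≤ Nat.nth Nat.Prime (i-1) * supernorm M := Nat.mul_le_mul_left _ ih'
          _ = nthPrime i * supernorm M := rfl
  have hK0 : L ≠ 0 := by
    intro h
    rw [h, Multiset.sum_zero] at hsize
    omega
  have h1 := aux L hparts hK0
  have h2 : Nat.nth Nat.Prime n ≤ Nat.nth Nat.Prime (L.sum - 1) :=
    (Nat.nth_le_nth (p := Nat.Prime) hinf).mpr (by omega)
  have : nthPrime (n+1) = Nat.nth Nat.Prime n := by
    simp [nthPrime]
  rw [this]
  exact le_trans h2 h1
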